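/- Let β ∈ 𝒜 and let c ∈ C_X(𝒜,β) satisfy c_β < 0. If ν ∈ ℝ^𝒜 satisfies condition (★) for c but ν is not an X-circuit of 𝒜, then c is not an edge generator of the cone C_X(𝒜,β). -/

import Mathlib

open Finset

/-- Dot product on `Fin n → ℝ`. -/
noncomputable def dotp {n : ℕ} (y x : Fin n → ℝ) : ℝ := ∑ i, y i * x i

/-- Support function `σ_X : ℝⁿ → ℝ ∪ {±∞}` of a set `X ⊆ ℝⁿ`. -/
noncomputable def suppFn {n : ℕ} (X : Set (Fin n → ℝ)) (y : Fin n → ℝ) : EReal :=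
  ⨆ x ∈ X, ((dotp y x : ℝ) : EReal)

/-- The linear map `𝒜 : ℝ^𝒜 → ℝⁿ`, `ν ↦ Σ_α ν_α α`. -/
noncomputable def Amap {n m : ℕ} (A : Fin m → Fin n → ℝ) (ν : Fin m → ℝ) : Fin n → ℝ :=
  fun j => ∑ i, ν i * A i j

/-- `N_β = {ν : ν_α ≥ 0 (α ≠ β), Σ ν_α = 0}`. -/
def Nbeta {m : ℕ} (b : Fin m) : Set (Fin m → ℝ) :=
  {ν | (∀ i, i ≠ b → 0 ≤ ν i) ∧ ∑ i, ν i = 0}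

/-- Two vectors are proportional if one is a scalar multiple of the other. -/
def Proportional {m : ℕ} (u v : Fin m → ℝ) : Prop :=
  ∃ t : ℝ, u = t • v ∨ v = t • u

/-- The augmented support function `ν ↦ σ_X(-𝒜ν)`. -/
noncomputable def sigA {n m : ℕ} (X : Set (Fin n → ℝ)) (A : Fin m → Fin n → ℝ)
    (ν : Fin m → ℝ) : EReal :=
  suppFn X (-(Amap A ν))

/-- The map `ν ↦ σ_X(-𝒜ν)` is affine on the segment `[ν1, ν2]`. -/
def SigmaAffineOnSeg {n m : ℕ} (X : Set (Fin n → ℝ)) (A : Fin m → Fin n → ℝ)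
    (ν1 ν2 : Fin m → ℝ) : Prop :=
  ∀ t : ℝ, t ∈ Set.Icc (0:ℝ) 1 →
    sigA X A (t • ν1 + (1 - t) • ν2) =
      (t : EReal) * sigA X A ν1 + ((1 - t : ℝ) : EReal) * sigA X A ν2

/-- `ν` is an `X`-circuit of `𝒜` (with negative index allowed only at `b`). -/
def IsXCircuit {n m : ℕ} (X : Set (Fin n → ℝ)) (A : Fin m → Fin n → ℝ)
    (b : Fin m) (ν : Fin m → ℝ) : Prop :=
  ν ∈ Nbeta b ∧ ν ≠ 0 ∧ sigA X A ν < ⊤ ∧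
  ¬ ∃ (ν1 ν2 : Fin m → ℝ) (θ : ℝ), ν1 ∈ Nbeta b ∧ ν2 ∈ Nbeta b ∧
      ¬ Proportional ν1 ν2 ∧ θ ∈ Set.Ioo (0:ℝ) 1 ∧
      ν = θ • ν1 + (1 - θ) • ν2 ∧ SigmaAffineOnSeg X A ν1 ν2

/-- All finite nonnegative combinations of elements of `S` (including `0`). -/
def coneHull {E : Type*} [AddCommMonoid E] [SMul ℝ E] (S : Set E) : Set E :=
  {x | ∃ (k : ℕ) (t : Fin k → ℝ) (v : Fin k → E),
    (∀ j, 0 ≤ t j) ∧ (∀ j, v j ∈ S) ∧ x = ∑ j, t j • v j}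

/-- `v` is an edge generator of the convex cone `K`. -/
def IsEdgeGenerator {E : Type*} [AddCommMonoid E] [SMul ℝ E] (K : Set E) (v : E) : Prop :=
  v ≠ 0 ∧ v ∈ K ∧ ∀ u ∈ K, ∀ w ∈ K, v = u + w →
    (∃ a : ℝ, 0 ≤ a ∧ u = a • v) ∧ (∃ b : ℝ, 0 ≤ b ∧ w = b • v)

/-- The `X`-AGE cone `C_X(𝒜, β)`, as a cone of coefficient vectors. -/
def AgeCone {n m : ℕ} (X : Set (Fin n → ℝ)) (A : Fin m → Fin n → ℝ) (b : Fin m) :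
    Set (Fin m → ℝ) :=
  {c | (∀ i, i ≠ b → 0 ≤ c i) ∧ ∀ x ∈ X, 0 ≤ ∑ i, c i * Real.exp (dotp (A i) x)}

/-- The `X`-SAGE cone `C_X(𝒜) = Σ_β C_X(𝒜, β)`. -/
def Sage {n m : ℕ} (X : Set (Fin n → ℝ)) (A : Fin m → Fin n → ℝ) : Set (Fin m → ℝ) :=
  {c | ∃ f : Fin m → (Fin m → ℝ), (∀ b, f b ∈ AgeCone X A b) ∧ c = ∑ b, f b}

/-- One summand of the relative entropy, with the conventions `0·log 0 = 0` and
`D = ∞` if `a > 0` while `c ≤ 0`. -/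
noncomputable def relEnt (a c : ℝ) : EReal :=
  if a = 0 then 0 else if 0 < c then ((a * Real.log (a / c) : ℝ) : EReal) else ⊤

/-- The relative entropy `D(ν_{∖β}, e · c_{∖β})`. -/
noncomputable def relEntSum {m : ℕ} (b : Fin m) (ν c : Fin m → ℝ) : EReal :=
  ∑ i ∈ Finset.univ.erase b, relEnt (ν i) (Real.exp 1 * c i)

/-- Condition (★): `ν ∈ N_β`, `ν ≠ 0`, `σ_X(-𝒜ν) + D(ν_{∖β}, e c_{∖β}) ≤ c_β`. -/
def StarCond {n m : ℕ} (X : Set (Fin n → ℝ)) (A : Fin m → Fin n → ℝ)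
    (b : Fin m) (c ν : Fin m → ℝ) : Prop :=
  ν ∈ Nbeta b ∧ ν ≠ 0 ∧ sigA X A ν + relEntSum b ν c ≤ (c b : EReal)

/-- The `λ`-witnessed AGE cone `C_X(𝒜, λ)` for a normalized `λ` with `λ_β = -1`. -/
noncomputable def WitnessCone {n m : ℕ} (X : Set (Fin n → ℝ)) (A : Fin m → Fin n → ℝ)
    (b : Fin m) (l : Fin m → ℝ) : Set (Fin m → ℝ) :=
  {c | (∀ i, i ≠ b → 0 ≤ c i) ∧
    (-(c b)) * Real.exp ((sigA X A l).toReal) ≤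
      ∏ i ∈ Finset.univ.filter (fun i => 0 < l i), (c i / l i) ^ (l i)}

/-- Normalized `X`-circuits in `N_β`. -/
def LambdaB {n m : ℕ} (X : Set (Fin n → ℝ)) (A : Fin m → Fin n → ℝ) (b : Fin m) :
    Set (Fin m → ℝ) :=
  {l | IsXCircuit X A b l ∧ l b = -1}

/-- All normalized `X`-circuits of `𝒜`. -/
def Lambda {n m : ℕ} (X : Set (Fin n → ℝ)) (A : Fin m → Fin n → ℝ) : Set (Fin m → ℝ) :=
  ⋃ b, LambdaB X A b

/-- Functional form `φ_λ = (λ, σ_X(-𝒜λ)) ∈ ℝ^𝒜 × ℝ`. -/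
noncomputable def phiVec {n m : ℕ} (X : Set (Fin n → ℝ)) (A : Fin m → Fin n → ℝ)
    (l : Fin m → ℝ) : (Fin m → ℝ) × ℝ :=
  (l, (sigA X A l).toReal)

/-- Functional form as an affine function `φ_λ(y) = Σ y_α λ_α + σ_X(-𝒜λ)`. -/
noncomputable def phiFun {n m : ℕ} (X : Set (Fin n → ℝ)) (A : Fin m → Fin n → ℝ)
    (l : Fin m → ℝ) (y : Fin m → ℝ) : ℝ :=
  (∑ i, y i * l i) + (sigA X A l).toReal

/-- The circuit graph `G_X(𝒜)`. -/
noncomputable def circuitGraph {n m : ℕ} (X : Set (Fin n → ℝ)) (A : Fin m → Fin n → ℝ) :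
    Set ((Fin m → ℝ) × ℝ) :=
  coneHull ((phiVec X A '' Lambda X A) ∪ {((0 : Fin m → ℝ), (1 : ℝ))})

/-- The reduced normalized `X`-circuits `Λ*_X(𝒜)`. -/
noncomputable def LambdaStar {n m : ℕ} (X : Set (Fin n → ℝ)) (A : Fin m → Fin n → ℝ) :
    Set (Fin m → ℝ) :=
  {l | l ∈ Lambda X A ∧ IsEdgeGenerator (circuitGraph X A) (phiVec X A l)}

/-- `λ`-witnessed AGE cone for a normalized circuit, with `β` recovered from `λ`. -/
noncomputable def WitnessConeL {n m : ℕ} (X : Set (Fin n → ℝ)) (A : Fin m → Fin n → ℝ)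
    (l : Fin m → ℝ) : Set (Fin m → ℝ) :=
  ⋃ b ∈ {b : Fin m | l b = -1}, WitnessCone X A b l

/-- Dual cone of a set of coefficient vectors in `ℝ^𝒜`. -/
def dualConeV {m : ℕ} (K : Set (Fin m → ℝ)) : Set (Fin m → ℝ) :=
  {v | ∀ c ∈ K, 0 ≤ ∑ i, v i * c i}

/-- Dual cone of a subset of `ℝ^𝒜 × ℝ`. -/
def dualConeP {m : ℕ} (K : Set ((Fin m → ℝ) × ℝ)) : Set ((Fin m → ℝ) × ℝ) :=
  {p | ∀ q ∈ K, 0 ≤ (∑ i, p.1 i * q.1 i) + p.2 * q.2}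

/-- The basis functions `x ↦ exp(αᵀx)`, `α ∈ 𝒜`, are linearly independent on `X`. -/
def ExpLinIndep {n m : ℕ} (X : Set (Fin n → ℝ)) (A : Fin m → Fin n → ℝ) : Prop :=
  LinearIndependent ℝ (fun i : Fin m => fun x : X => Real.exp (dotp (A i) (x : Fin n → ℝ)))

/-- `X` is a polyhedron: an intersection of finitely many closed halfspaces. -/
def IsPolyhedron {n : ℕ} (X : Set (Fin n → ℝ)) : Prop :=
  ∃ (k : ℕ) (a : Fin k → Fin n → ℝ) (bb : Fin k → ℝ),
    X = {x | ∀ i, dotp (a i) x ≤ bb i}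

/-- Minkowski sum `Σ_{l ∈ Λ} C(l)` (finite sums, one summand per `l`;
the empty sum gives `{0}`). -/
def MinkSumOver {m : ℕ} (Λ : Set (Fin m → ℝ)) (C : (Fin m → ℝ) → Set (Fin m → ℝ)) :
    Set (Fin m → ℝ) :=
  {c | ∃ (s : Finset (Fin m → ℝ)) (f : (Fin m → ℝ) → (Fin m → ℝ)),
    (↑s ⊆ Λ) ∧ (∀ l ∈ s, f l ∈ C l) ∧ c = ∑ l ∈ s, f l}

-- coe sum helper
lemma coe_sum' {ι : Type*} (s : Finset ι) (f : ι → ℝ) :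
    ((∑ i ∈ s, f i : ℝ) : EReal) = ∑ i ∈ s, (f i : EReal) :=
  map_sum (⟨⟨Real.toEReal, EReal.coe_zero⟩, EReal.coe_add⟩ : ℝ →+ EReal) f s

lemma sum_ne_bot {ι : Type*} (s : Finset ι) (f : ι → EReal) (h : ∀ i ∈ s, f i ≠ ⊥) :
    ∑ i ∈ s, f i ≠ ⊥ := by
  induction s using Finset.cons_induction with
  | empty => simp
  | cons a s ha ih =>
    rw [Finset.sum_cons]
    rw [Ne, EReal.add_eq_bot_iff]
    push_neg
    exact ⟨h a (Finset.mem_cons_self a s), ih fun i hi => h i (Finset.mem_cons_of_mem hi)⟩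

lemma sum_eq_top {ι : Type*} [DecidableEq ι] (s : Finset ι) (f : ι → EReal) (h : ∀ i ∈ s, f i ≠ ⊥)
    {i₀ : ι} (hi : i₀ ∈ s) (htop : f i₀ = ⊤) : ∑ i ∈ s, f i = ⊤ := by
  rw [← Finset.add_sum_erase s f hi, htop]
  exact EReal.top_add_of_ne_bot (sum_ne_bot _ _ fun i hx => h i (Finset.mem_of_mem_erase hx))

lemma dotp_le_suppFn {n : ℕ} (X : Set (Fin n → ℝ)) (y x : Fin n → ℝ) (hx : x ∈ X) :
    ((dotp y x : ℝ) : EReal) ≤ suppFn X y := le_biSup (fun x => ((dotp y x : ℝ) : EReal)) hx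

lemma suppFn_ne_bot {n : ℕ} (X : Set (Fin n → ℝ)) (hX : X.Nonempty) (y : Fin n → ℝ) :
    suppFn X y ≠ ⊥ := by
  obtain ⟨x, hx⟩ := hX
  exact fun h => by simpa [h] using dotp_le_suppFn X y x hx

-- tangent inequality
lemma tangent_ineq {κ c t : ℝ} (hκ : 0 < κ) (hc : 0 < c) :
    κ * (t - Real.log (κ / (Real.exp 1 * c))) ≤ c * Real.exp t := by
  have hL : Real.log (κ / (Real.exp 1 * c)) = Real.log (κ / c) - 1 := by
    rw [Real.log_div hκ.ne' (by positivity), Real.log_div hκ.ne' hc.ne',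
      Real.log_mul (Real.exp_pos 1).ne' hc.ne', Real.log_exp]
    ring
  rw [hL]
  set L := Real.log (κ / c) with hLdef
  have h1 : (t - L) + 1 ≤ Real.exp (t - L) := Real.add_one_le_exp _
  have hexpL : Real.exp L = κ / c := Real.exp_log (by positivity)
  have h2 : Real.exp t = Real.exp (t - L) * (κ / c) := by
    rw [← hexpL, ← Real.exp_add]; ring_nf
  calc κ * (t - (L - 1)) = ((t - L) + 1) * κ := by ring
    _ ≤ Real.exp (t - L) * κ := by nlinarith [Real.add_one_le_exp (t - L)]
    _ = c * Real.exp t := by rw [h2]; field_simp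

lemma dotp_neg {n : ℕ} (y x : Fin n → ℝ) : dotp (-y) x = - dotp y x := by
  simp [dotp, neg_mul, Finset.sum_neg_distrib]

lemma sum_dotp {n m : ℕ} (A : Fin m → Fin n → ℝ) (κ : Fin m → ℝ) (x : Fin n → ℝ) :
    ∑ i, κ i * dotp (A i) x = dotp (Amap A κ) x := by
  simp only [dotp, Amap, Finset.mul_sum, Finset.sum_mul]
  rw [Finset.sum_comm]
  congr 1; ext j; congr 1; ext i; ring

lemma age_of_witness {n m : ℕ} (X : Set (Fin n → ℝ)) (A : Fin m → Fin n → ℝ)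
    (b : Fin m) (c κ : Fin m → ℝ) (S : ℝ)
    (hκN : κ ∈ Nbeta b) (hc0 : ∀ i, i ≠ b → 0 ≤ c i)
    (hpos : ∀ i, i ≠ b → 0 < κ i → 0 < c i)
    (hS : sigA X A κ ≤ (S : EReal))
    (hb : S + ∑ i ∈ univ.erase b,
      (if κ i = 0 then 0 else κ i * Real.log (κ i / (Real.exp 1 * c i))) ≤ c b) :
    c ∈ AgeCone X A b := by
  refine ⟨hc0, fun x hx => ?_⟩
  set t : Fin m → ℝ := fun i => dotp (A i) x with ht
  -- key pointwise bound
  have key : ∀ i ∈ univ.erase b,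
      κ i * (t i - t b) - (if κ i = 0 then 0 else κ i * Real.log (κ i / (Real.exp 1 * c i)))
        ≤ c i * Real.exp (t i - t b) := by
    intro i hi
    have hib : i ≠ b := Finset.ne_of_mem_erase hi
    by_cases h0 : κ i = 0
    · simp only [h0, if_pos, sub_zero, mul_zero, zero_mul, zero_sub, neg_zero, if_true]
      simp only [h0, zero_mul, zero_sub, neg_zero] at *
      have := mul_nonneg (hc0 i hib) (Real.exp_pos (t i - t b)).le
      linarith
    · have hκpos : 0 < κ i := lt_of_le_of_ne (hκN.1 i hib) (Ne.symm h0)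
      have hcpos : 0 < c i := hpos i hib hκpos
      simp only [h0, if_neg, if_false]
      have := tangent_ineq (κ := κ i) (c := c i) (t := t i - t b) hκpos hcpos
      linarith
  -- sum the bound
  have hsum : ∑ i ∈ univ.erase b, (κ i * (t i - t b)
        - (if κ i = 0 then 0 else κ i * Real.log (κ i / (Real.exp 1 * c i))))
      ≤ ∑ i ∈ univ.erase b, c i * Real.exp (t i - t b) := Finset.sum_le_sum key
  -- identify the linear part
  have hκsum : ∑ i, κ i = 0 := hκN.2
  have hκb : ∑ i ∈ univ.erase b, κ i = - κ b := by
    have := Finset.add_sum_erase univ κ (Finset.mem_univ b)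
    linarith [hκsum, this]
  have hlin : ∑ i ∈ univ.erase b, κ i * (t i - t b) = dotp (Amap A κ) x := by
    have h1 : ∑ i ∈ univ.erase b, κ i * (t i - t b)
        = (∑ i ∈ univ.erase b, κ i * t i) - (∑ i ∈ univ.erase b, κ i) * t b := by
      simp only [mul_sub]
      rw [Finset.sum_sub_distrib, Finset.sum_mul]
    have h2 : ∑ i ∈ univ.erase b, κ i * t i = (∑ i, κ i * t i) - κ b * t b := by
      have h := Finset.add_sum_erase univ (fun i => κ i * t i) (Finset.mem_univ b)
      linarith
    rw [h1, h2, hκb, ← sum_dotp A κ x]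
    ring
  -- dotp (Amap A κ) x ≥ -S
  have hdot : - S ≤ dotp (Amap A κ) x := by
    have h1 : ((dotp (-(Amap A κ)) x : ℝ) : EReal) ≤ (S : EReal) :=
      le_trans (dotp_le_suppFn X _ x hx) hS
    have h2 : dotp (-(Amap A κ)) x ≤ S := EReal.coe_le_coe_iff.mp h1
    rw [dotp_neg] at h2
    linarith
  -- combine
  set D : ℝ := ∑ i ∈ univ.erase b,
      (if κ i = 0 then 0 else κ i * Real.log (κ i / (Real.exp 1 * c i))) with hD
  have hmain : - c b ≤ ∑ i ∈ univ.erase b, c i * Real.exp (t i - t b) := by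
    have : ∑ i ∈ univ.erase b, (κ i * (t i - t b)
        - (if κ i = 0 then 0 else κ i * Real.log (κ i / (Real.exp 1 * c i))))
        = dotp (Amap A κ) x - D := by
      rw [Finset.sum_sub_distrib, hlin]
    rw [this] at hsum
    linarith
  -- multiply by exp (t b)
  have hsplit : ∑ i, c i * Real.exp (t i)
      = c b * Real.exp (t b) + ∑ i ∈ univ.erase b, c i * Real.exp (t i) := by
    exact (Finset.add_sum_erase univ (fun i => c i * Real.exp (t i)) (Finset.mem_univ b)).symm
  have hexp : ∀ i, c i * Real.exp (t i) = (c i * Real.exp (t i - t b)) * Real.exp (t b) := by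
    intro i; rw [Real.exp_sub]; field_simp
  have hfin : 0 ≤ c b * Real.exp (t b) + ∑ i ∈ univ.erase b, c i * Real.exp (t i) := by
    have h2 : ∑ i ∈ univ.erase b, c i * Real.exp (t i)
        = (∑ i ∈ univ.erase b, c i * Real.exp (t i - t b)) * Real.exp (t b) := by
      rw [Finset.sum_mul]; exact Finset.sum_congr rfl fun i _ => hexp i
    rw [h2]
    have h3 := mul_le_mul_of_nonneg_right hmain (Real.exp_pos (t b)).le
    nlinarith [Real.exp_pos (t b)]
  rw [hsplit]
  exact hfin

lemma sigA_scale_le {n m : ℕ} (X : Set (Fin n → ℝ)) (A : Fin m → Fin n → ℝ)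
    (w : Fin m → ℝ) (θ S : ℝ) (hθ : 0 ≤ θ) (hS : sigA X A w ≤ (S : EReal)) :
    sigA X A (fun i => θ * w i) ≤ ((θ * S : ℝ) : EReal) := by
  rw [sigA, suppFn]
  apply iSup₂_le
  intro x hx
  rw [EReal.coe_le_coe_iff]
  have h1 : ((dotp (-(Amap A w)) x : ℝ) : EReal) ≤ (S : EReal) :=
    le_trans (dotp_le_suppFn X _ x hx) hS
  rw [EReal.coe_le_coe_iff] at h1
  have hA : dotp (-(Amap A (fun i => θ * w i))) x = θ * dotp (-(Amap A w)) x := by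
    simp only [dotp, Amap, Pi.neg_apply]
    rw [Finset.mul_sum]
    apply Finset.sum_congr rfl
    intro j _
    have : ∑ i, θ * w i * A i j = θ * ∑ i, w i * A i j := by
      rw [Finset.mul_sum]; apply Finset.sum_congr rfl; intro i _; ring
    rw [this]; ring
  rw [hA]
  nlinarith

set_option maxHeartbeats 1000000 in
theorem statement4 {n m : ℕ} (X : Set (Fin n → ℝ)) (hXne : X.Nonempty) (hXcl : IsClosed X)
    (hXcv : Convex ℝ X) (A : Fin m → Fin n → ℝ) (hA : Function.Injective A) (hm : 0 < m)
    (b : Fin m) (c ν : Fin m → ℝ)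
    (hc : c ∈ AgeCone X A b) (hcb : c b < 0)
    (hstar : StarCond X A b c ν)
    (hnotcirc : ¬ IsXCircuit X A b ν) :
    ¬ IsEdgeGenerator (AgeCone X A b) c := by
  classical
  rintro ⟨-, -, hcedge⟩
  obtain ⟨hνN, hνne, hineq⟩ := hstar
  have hνbot : sigA X A ν ≠ ⊥ := suppFn_ne_bot X hXne _
  -- c is positive on the support of ν (off b)
  have hcpos : ∀ i, i ≠ b → 0 < ν i → 0 < c i := by
    intro i hib hνi
    by_contra hci
    push_neg at hci
    have htop : relEnt (ν i) (Real.exp 1 * c i) = ⊤ := by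
      rw [relEnt, if_neg hνi.ne', if_neg (by nlinarith [Real.exp_pos 1])]
    have hrelne : ∀ j ∈ univ.erase b, relEnt (ν j) (Real.exp 1 * c j) ≠ ⊥ := by
      intro j _
      rw [relEnt]; split_ifs <;> simp [← EReal.coe_mul]
    have hsumtop : relEntSum b ν c = ⊤ := by
      rw [relEntSum]
      exact sum_eq_top _ _ hrelne (Finset.mem_erase.2 ⟨hib, Finset.mem_univ i⟩) htop
    rw [hsumtop, EReal.add_top_of_ne_bot hνbot] at hineq
    exact absurd hineq (by simp)
  -- relEntSum is finite, equal to the real sum DRν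
  set DRν : ℝ := ∑ i ∈ univ.erase b,
      (if ν i = 0 then 0 else ν i * Real.log (ν i / (Real.exp 1 * c i))) with hDRν
  have hrel : relEntSum b ν c = (DRν : EReal) := by
    rw [relEntSum, hDRν, coe_sum']
    apply Finset.sum_congr rfl
    intro i hi
    have hib : i ≠ b := Finset.ne_of_mem_erase hi
    rw [relEnt]
    by_cases h0 : ν i = 0
    · simp [h0]
    · have hνpos : 0 < ν i := lt_of_le_of_ne (hνN.1 i hib) (Ne.symm h0)
      have hcip := hcpos i hib hνpos
      rw [if_neg h0, if_pos (by positivity), if_neg h0]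
  -- sigA ν is finite
  have hνtop : sigA X A ν ≠ ⊤ := by
    intro h
    rw [h, hrel, EReal.top_add_of_ne_bot (by simp)] at hineq
    exact absurd hineq (by simp)
  set Sν : ℝ := (sigA X A ν).toReal with hSν
  have hνcoe : ((Sν : ℝ) : EReal) = sigA X A ν := EReal.coe_toReal hνtop hνbot
  have hreal : Sν + DRν ≤ c b := by
    rw [hrel, ← hνcoe, ← EReal.coe_add, EReal.coe_le_coe_iff] at hineq
    exact hineq
  -- ν is not a circuit: get the decomposition
  have hex : ∃ (ν1 ν2 : Fin m → ℝ) (θ : ℝ), ν1 ∈ Nbeta b ∧ ν2 ∈ Nbeta b ∧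
      ¬ Proportional ν1 ν2 ∧ θ ∈ Set.Ioo (0:ℝ) 1 ∧
      ν = θ • ν1 + (1 - θ) • ν2 ∧ SigmaAffineOnSeg X A ν1 ν2 := by
    by_contra h
    exact hnotcirc ⟨hνN, hνne, lt_top_iff_ne_top.2 hνtop, h⟩
  obtain ⟨ν1, ν2, θ, hν1N, hν2N, hnprop, hθIo, hdec, haff⟩ := hex
  obtain ⟨hθ0, hθ1⟩ := hθIo
  have h1θ : 0 < 1 - θ := by linarith
  have haffθ := haff θ ⟨hθ0.le, hθ1.le⟩
  rw [← hdec] at haffθ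
  have h1bot : sigA X A ν1 ≠ ⊥ := suppFn_ne_bot X hXne _
  have h2bot : sigA X A ν2 ≠ ⊥ := suppFn_ne_bot X hXne _
  have hmulbot : ∀ (θ' : ℝ) (z : EReal), 0 < θ' → z ≠ ⊥ → (θ' : EReal) * z ≠ ⊥ := by
    intro θ' z hθ' hz
    induction z using EReal.rec with
    | bot => exact absurd rfl hz
    | coe r => rw [← EReal.coe_mul]; exact EReal.coe_ne_bot _
    | top => rw [EReal.coe_mul_top_of_pos hθ']; simp
  have h1top : sigA X A ν1 ≠ ⊤ := by
    intro h
    rw [h, EReal.coe_mul_top_of_pos hθ0,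
      EReal.top_add_of_ne_bot (hmulbot _ _ h1θ h2bot)] at haffθ
    exact hνtop haffθ
  have h2top : sigA X A ν2 ≠ ⊤ := by
    intro h
    rw [h, EReal.coe_mul_top_of_pos h1θ,
      EReal.add_top_of_ne_bot (hmulbot _ _ hθ0 h1bot)] at haffθ
    exact hνtop haffθ
  set S1 : ℝ := (sigA X A ν1).toReal with hS1
  set S2 : ℝ := (sigA X A ν2).toReal with hS2
  have h1coe : ((S1 : ℝ) : EReal) = sigA X A ν1 := EReal.coe_toReal h1top h1bot
  have h2coe : ((S2 : ℝ) : EReal) = sigA X A ν2 := EReal.coe_toReal h2top h2bot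
  have hSsum : Sν = θ * S1 + (1 - θ) * S2 := by
    have h : ((Sν : ℝ) : EReal) = ((θ * S1 + (1 - θ) * S2 : ℝ) : EReal) := by
      rw [hνcoe, haffθ, ← h1coe, ← h2coe, EReal.coe_add, EReal.coe_mul, EReal.coe_mul]
    exact_mod_cast h
  -- the two halves of ν
  set κ : Fin m → ℝ := fun i => θ * ν1 i with hκdef
  set μ : Fin m → ℝ := fun i => (1 - θ) * ν2 i with hμdef
  have hκμ : ∀ i, κ i + μ i = ν i := by
    intro i
    have h := congrFun hdec i
    simp only [Pi.add_apply, Pi.smul_apply, smul_eq_mul] at h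
    simp only [hκdef, hμdef]
    linarith
  have hκ0 : ∀ i, i ≠ b → 0 ≤ κ i := fun i hib => mul_nonneg hθ0.le (hν1N.1 i hib)
  have hμ0 : ∀ i, i ≠ b → 0 ≤ μ i := fun i hib => mul_nonneg h1θ.le (hν2N.1 i hib)
  have hκsum : ∑ i, κ i = 0 := by
    simp only [hκdef, ← Finset.mul_sum, hν1N.2, mul_zero]
  have hμsum : ∑ i, μ i = 0 := by
    simp only [hμdef, ← Finset.mul_sum, hν2N.2, mul_zero]
  have hκN : κ ∈ Nbeta b := ⟨hκ0, hκsum⟩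
  have hμN : μ ∈ Nbeta b := ⟨hμ0, hμsum⟩
  -- entropies of the two halves
  set D1 : ℝ := ∑ i ∈ univ.erase b,
      (if κ i = 0 then 0 else κ i * Real.log (ν i / (Real.exp 1 * c i))) with hD1
  set D2 : ℝ := ∑ i ∈ univ.erase b,
      (if μ i = 0 then 0 else μ i * Real.log (ν i / (Real.exp 1 * c i))) with hD2
  -- the two candidate AGE vectors
  set c1 : Fin m → ℝ := fun i =>
    if i = b then θ * S1 + D1 else (if ν i = 0 then θ * c i else c i * κ i / ν i) with hc1
  set c2 : Fin m → ℝ := fun i => c i - c1 i with hc2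
  -- basic per-coordinate facts
  have hν0κ : ∀ i, i ≠ b → ν i = 0 → κ i = 0 := by
    intro i hib h0
    have h1 := hκμ i
    have h2 := hκ0 i hib
    have h3 := hμ0 i hib
    linarith
  have hν0μ : ∀ i, i ≠ b → ν i = 0 → μ i = 0 := by
    intro i hib h0
    have h1 := hκμ i
    have h2 := hκ0 i hib
    have h3 := hμ0 i hib
    linarith
  have hκν : ∀ i, i ≠ b → κ i ≠ 0 → 0 < ν i := by
    intro i hib h0
    have h1 := hκμ i
    have h2 := lt_of_le_of_ne (hκ0 i hib) (Ne.symm h0)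
    have h3 := hμ0 i hib
    linarith
  have hμν : ∀ i, i ≠ b → μ i ≠ 0 → 0 < ν i := by
    intro i hib h0
    have h1 := hκμ i
    have h2 := lt_of_le_of_ne (hμ0 i hib) (Ne.symm h0)
    have h3 := hκ0 i hib
    linarith
  -- D1 + D2 = DRν
  have hDsplit : D1 + D2 = DRν := by
    rw [hD1, hD2, hDRν, ← Finset.sum_add_distrib]
    apply Finset.sum_congr rfl
    intro i hi
    have hib : i ≠ b := Finset.ne_of_mem_erase hi
    by_cases h0 : ν i = 0
    · simp [h0, hν0κ i hib h0, hν0μ i hib h0]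
    · rw [if_neg h0]
      by_cases hκz : κ i = 0
      · have hμz : μ i = ν i := by have := hκμ i; linarith [hκz]
        rw [if_pos hκz, if_neg (by rw [hμz]; exact h0), hμz, zero_add]
      · by_cases hμz : μ i = 0
        · have hκe : κ i = ν i := by have := hκμ i; linarith [hμz]
          rw [if_neg hκz, if_pos hμz, hκe, add_zero]
        · rw [if_neg hκz, if_neg hμz]
          have h := hκμ i
          linear_combination Real.log (ν i / (Real.exp 1 * c i)) * h
  -- c1 is in the AGE cone
  have hc1coords : ∀ i, i ≠ b → ν i ≠ 0 → c1 i = c i * κ i / ν i := by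
    intro i hib h0
    simp only [hc1, if_neg hib, if_neg h0]
  have hc1b : c1 b = θ * S1 + D1 := by simp [hc1]
  have hc1nonneg : ∀ i, i ≠ b → 0 ≤ c1 i := by
    intro i hib
    by_cases h0 : ν i = 0
    · simp only [hc1, if_neg hib, if_pos h0]
      exact mul_nonneg hθ0.le (hc.1 i hib)
    · rw [hc1coords i hib h0]
      have hνpos : 0 < ν i := lt_of_le_of_ne (hνN.1 i hib) (Ne.symm h0)
      have := hc.1 i hib
      have := hκ0 i hib
      positivity
  have hc1pos : ∀ i, i ≠ b → 0 < κ i → 0 < c1 i := by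
    intro i hib hκi
    have hνpos : 0 < ν i := hκν i hib hκi.ne'
    have hcip : 0 < c i := hcpos i hib hνpos
    rw [hc1coords i hib hνpos.ne']
    positivity
  have hsigκ : sigA X A κ ≤ ((θ * S1 : ℝ) : EReal) := by
    simp only [hκdef]
    exact sigA_scale_le X A ν1 θ S1 hθ0.le (le_of_eq h1coe.symm)
  have hDκ : ∑ i ∈ univ.erase b,
      (if κ i = 0 then 0 else κ i * Real.log (κ i / (Real.exp 1 * c1 i))) = D1 := by
    rw [hD1]
    apply Finset.sum_congr rfl
    intro i hi
    have hib : i ≠ b := Finset.ne_of_mem_erase hi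
    by_cases hκz : κ i = 0
    · simp [hκz]
    · rw [if_neg hκz, if_neg hκz]
      have hκpos : 0 < κ i := lt_of_le_of_ne (hκ0 i hib) (Ne.symm hκz)
      have hνpos : 0 < ν i := hκν i hib hκz
      have hcip : 0 < c i := hcpos i hib hνpos
      rw [hc1coords i hib hνpos.ne']
      congr 2
      have he := Real.exp_pos 1
      field_simp
  have hmem1 : c1 ∈ AgeCone X A b := by
    apply age_of_witness X A b c1 κ (θ * S1) hκN hc1nonneg
      (fun i hib hκi => hc1pos i hib hκi) hsigκ
    rw [hDκ, hc1b]
  -- c2 is in the AGE cone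
  have hc2coords : ∀ i, i ≠ b → ν i ≠ 0 → c2 i = c i * μ i / ν i := by
    intro i hib h0
    simp only [hc2, hc1coords i hib h0]
    have h := hκμ i
    field_simp
    linear_combination (-(c i)) * h
  have hc2b : c2 b = c b - (θ * S1 + D1) := by simp [hc2, hc1b]
  have hc2nonneg : ∀ i, i ≠ b → 0 ≤ c2 i := by
    intro i hib
    by_cases h0 : ν i = 0
    · simp only [hc2, hc1, if_neg hib, if_pos h0]
      have := hc.1 i hib
      nlinarith
    · rw [hc2coords i hib h0]
      have hνpos : 0 < ν i := lt_of_le_of_ne (hνN.1 i hib) (Ne.symm h0)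
      have := hc.1 i hib
      have := hμ0 i hib
      positivity
  have hc2pos : ∀ i, i ≠ b → 0 < μ i → 0 < c2 i := by
    intro i hib hμi
    have hνpos : 0 < ν i := hμν i hib hμi.ne'
    have hcip : 0 < c i := hcpos i hib hνpos
    rw [hc2coords i hib hνpos.ne']
    positivity
  have hsigμ : sigA X A μ ≤ (((1 - θ) * S2 : ℝ) : EReal) := by
    simp only [hμdef]
    exact sigA_scale_le X A ν2 (1 - θ) S2 h1θ.le (le_of_eq h2coe.symm)
  have hDμ : ∑ i ∈ univ.erase b,
      (if μ i = 0 then 0 else μ i * Real.log (μ i / (Real.exp 1 * c2 i))) = D2 := by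
    rw [hD2]
    apply Finset.sum_congr rfl
    intro i hi
    have hib : i ≠ b := Finset.ne_of_mem_erase hi
    by_cases hμz : μ i = 0
    · simp [hμz]
    · rw [if_neg hμz, if_neg hμz]
      have hμpos : 0 < μ i := lt_of_le_of_ne (hμ0 i hib) (Ne.symm hμz)
      have hνpos : 0 < ν i := hμν i hib hμz
      have hcip : 0 < c i := hcpos i hib hνpos
      rw [hc2coords i hib hνpos.ne']
      congr 2
      have he := Real.exp_pos 1
      field_simp
  have hmem2 : c2 ∈ AgeCone X A b := by
    apply age_of_witness X A b c2 μ ((1 - θ) * S2) hμN hc2nonneg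
      (fun i hib hμi => hc2pos i hib hμi) hsigμ
    rw [hDμ, hc2b]
    linarith [hreal, hSsum, hDsplit]
  -- decompose c
  have hsum : c = c1 + c2 := by
    funext i
    simp only [Pi.add_apply, hc2]
    ring
  obtain ⟨⟨a, ha0, hac⟩, ⟨a', ha'0, ha'c⟩⟩ := hcedge c1 hmem1 c2 hmem2 hsum
  -- extract proportionality of κ, μ with ν
  have hκa : ∀ i, i ≠ b → κ i = a * ν i := by
    intro i hib
    by_cases h0 : ν i = 0
    · rw [h0, mul_zero]
      exact hν0κ i hib h0
    · have hνpos : 0 < ν i := lt_of_le_of_ne (hνN.1 i hib) (Ne.symm h0)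
      have hcip : 0 < c i := hcpos i hib hνpos
      have h := congrFun hac i
      rw [Pi.smul_apply, smul_eq_mul, hc1coords i hib h0] at h
      have h2 : c i * κ i = c i * (a * ν i) := by
        field_simp at h
        linear_combination c i * h
      exact mul_left_cancel₀ hcip.ne' h2
  have hμa : ∀ i, i ≠ b → μ i = a' * ν i := by
    intro i hib
    by_cases h0 : ν i = 0
    · rw [h0, mul_zero]
      exact hν0μ i hib h0
    · have hνpos : 0 < ν i := lt_of_le_of_ne (hνN.1 i hib) (Ne.symm h0)
      have hcip : 0 < c i := hcpos i hib hνpos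
      have h := congrFun ha'c i
      rw [Pi.smul_apply, smul_eq_mul, hc2coords i hib h0] at h
      have h2 : c i * μ i = c i * (a' * ν i) := by
        field_simp at h
        linear_combination c i * h
      exact mul_left_cancel₀ hcip.ne' h2
  -- b-coordinate
  have hκab : κ b = a * ν b := by
    have h1 : ∑ i ∈ univ.erase b, κ i = ∑ i ∈ univ.erase b, a * ν i :=
      Finset.sum_congr rfl fun i hi => hκa i (Finset.ne_of_mem_erase hi)
    have h4 : ∑ i ∈ univ.erase b, a * ν i = a * ∑ i ∈ univ.erase b, ν i :=
      (Finset.mul_sum _ _ _).symm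
    have h2 := Finset.add_sum_erase univ κ (Finset.mem_univ b)
    have h3 := Finset.add_sum_erase univ ν (Finset.mem_univ b)
    have e1 : ∑ i ∈ univ.erase b, κ i = - κ b := by linarith [hκsum]
    have e2 : ∑ i ∈ univ.erase b, ν i = - ν b := by linarith [hνN.2]
    linear_combination -h1 - h4 + e1 - a * e2
  have hμab : μ b = a' * ν b := by
    have h1 : ∑ i ∈ univ.erase b, μ i = ∑ i ∈ univ.erase b, a' * ν i :=
      Finset.sum_congr rfl fun i hi => hμa i (Finset.ne_of_mem_erase hi)
    have h4 : ∑ i ∈ univ.erase b, a' * ν i = a' * ∑ i ∈ univ.erase b, ν i :=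
      (Finset.mul_sum _ _ _).symm
    have h2 := Finset.add_sum_erase univ μ (Finset.mem_univ b)
    have h3 := Finset.add_sum_erase univ ν (Finset.mem_univ b)
    have e1 : ∑ i ∈ univ.erase b, μ i = - μ b := by linarith [hμsum]
    have e2 : ∑ i ∈ univ.erase b, ν i = - ν b := by linarith [hνN.2]
    linear_combination -h1 - h4 + e1 - a' * e2
  have hκall : ∀ i, θ * ν1 i = a * ν i := by
    intro i
    by_cases hib : i = b
    · rw [hib]; exact hκab
    · exact hκa i hib
  have hμall : ∀ i, (1 - θ) * ν2 i = a' * ν i := by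
    intro i
    by_cases hib : i = b
    · rw [hib]; exact hμab
    · exact hμa i hib
  -- derive proportionality of ν1 and ν2, contradiction
  apply hnprop
  by_cases ha' : a' = 0
  · refine ⟨0, Or.inr ?_⟩
    funext i
    have h := hμall i
    rw [ha', zero_mul] at h
    have : ν2 i = 0 := by
      have := h1θ
      nlinarith
    simp [this]
  · refine ⟨(a * (1 - θ)) / (θ * a'), Or.inl ?_⟩
    funext i
    rw [Pi.smul_apply, smul_eq_mul]
    have h1 := hκall i
    have h2 := hμall i
    have hθne : θ ≠ 0 := hθ0.ne'
    have h1θne : (1 : ℝ) - θ ≠ 0 := h1θ.ne'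
    rw [div_mul_eq_mul_div, eq_div_iff (mul_ne_zero hθne ha')]
    linear_combination a' * h1 - a * h2
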